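/- arXiv:1209.1358 — 5 statements merged into one kernel-verified Lean document; each statement's English description precedes it below -/
import Mathlib

section
/- Let G be a graph and B a set of 'Byzantine' vertices such that any two distinct vertices of B are at graph distance at least 5, and such that around every b ∈ B the 8 surrounding vertices form a cycle whose removal of b leaves a path between any two neighbors of b (as in a torus with N > 5). Then in an N×N torus (N > 5) with such a set B, for any two correct vertices u and v there exists a path from u to v using only correct vertices (vertices not in B). -/
/-- The `N × N` torus network. -/
def torus (N : ℕ) : SimpleGraph (ZMod N × ZMod N) :=
  SimpleGraph.fromRel (fun a b =>
    (a.1 = b.1 ∧ a.2 = b.2 + 1) ∨ (a.2 = b.2 ∧ a.1 = b.1 + 1))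

namespace TorusAux

open SimpleGraph

variable {N : ℕ}

lemma one_ne_zero' (hN : 5 < N) : (1 : ZMod N) ≠ 0 := by
  haveI : Fact (1 < N) := ⟨by omega⟩
  exact one_ne_zero

lemma adj_right (hN : 5 < N) (i j : ZMod N) : (torus N).Adj (i, j) (i, j + 1) := by
  rw [torus, SimpleGraph.fromRel_adj]
  refine ⟨?_, Or.inr (Or.inl ⟨rfl, rfl⟩)⟩
  intro h
  have h2 : j = j + 1 := congrArg Prod.snd h
  exact one_ne_zero' hN (by linear_combination -h2)

lemma adj_down (hN : 5 < N) (i j : ZMod N) : (torus N).Adj (i, j) (i + 1, j) := by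
  rw [torus, SimpleGraph.fromRel_adj]
  refine ⟨?_, Or.inr (Or.inr ⟨rfl, rfl⟩)⟩
  intro h
  have h2 : i = i + 1 := congrArg Prod.fst h
  exact one_ne_zero' hN (by linear_combination -h2)

lemma dist_le_one {u v : ZMod N × ZMod N} (h : (torus N).Adj u v) :
    (torus N).dist u v ≤ 1 := by
  simpa using (torus N).dist_le (SimpleGraph.Walk.cons h .nil)

lemma dist_le_two {u w v : ZMod N × ZMod N} (h1 : (torus N).Adj u w)
    (h2 : (torus N).Adj w v) : (torus N).dist u v ≤ 2 := by
  simpa using (torus N).dist_le (SimpleGraph.Walk.cons h1 (SimpleGraph.Walk.cons h2 .nil))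

/-- From the "north" neighbor of `b = (i,j)` one can walk to any neighbor of `b`,
staying within distance 2 of `b` and avoiding `b`. -/
lemma ring (hN : 5 < N) (i j : ZMod N) {z : ZMod N × ZMod N}
    (hz : (torus N).Adj (i, j) z) :
    ∃ w : (torus N).Walk (i, j + 1) z,
      ∀ x ∈ w.support, x ≠ (i, j) ∧ (torus N).dist x (i, j) ≤ 2 := by
  have h1 : (1 : ZMod N) ≠ 0 := one_ne_zero' hN
  -- basic adjacencies around (i,j)
  have ha1 : (torus N).Adj (i, j) (i, j + 1) := adj_right hN i j
  have ha2 : (torus N).Adj (i, j) (i + 1, j) := adj_down hN i j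
  have ha3 : (torus N).Adj (i, j - 1) (i, j) := by
    have := adj_right hN i (j - 1); rwa [sub_add_cancel] at this
  have ha4 : (torus N).Adj (i - 1, j) (i, j) := by
    have := adj_down hN (i - 1) j; rwa [sub_add_cancel] at this
  have ha5 : (torus N).Adj (i, j + 1) (i + 1, j + 1) := adj_down hN i (j + 1)
  have ha6 : (torus N).Adj (i + 1, j) (i + 1, j + 1) := adj_right hN (i + 1) j
  have ha7 : (torus N).Adj (i + 1, j - 1) (i + 1, j) := by
    have := adj_right hN (i + 1) (j - 1); rwa [sub_add_cancel] at this
  have ha8 : (torus N).Adj (i, j - 1) (i + 1, j - 1) := adj_down hN i (j - 1)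
  have ha9 : (torus N).Adj (i - 1, j) (i - 1, j + 1) := adj_right hN (i - 1) j
  have ha10 : (torus N).Adj (i - 1, j + 1) (i, j + 1) := by
    have := adj_down hN (i - 1) (j + 1); rwa [sub_add_cancel] at this
  -- ne facts
  have ne_add : ∀ x : ZMod N, x + 1 ≠ x := fun x h => h1 (by linear_combination h)
  have ne_sub : ∀ x : ZMod N, x - 1 ≠ x := fun x h => h1 (by linear_combination -h)
  have pne1 : ((i, j + 1) : ZMod N × ZMod N) ≠ (i, j) := by
    intro h; exact ne_add j (congrArg Prod.snd h)
  have pne2 : ((i + 1, j + 1) : ZMod N × ZMod N) ≠ (i, j) := by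
    intro h; exact ne_add i (congrArg Prod.fst h)
  have pne3 : ((i + 1, j) : ZMod N × ZMod N) ≠ (i, j) := by
    intro h; exact ne_add i (congrArg Prod.fst h)
  have pne4 : ((i + 1, j - 1) : ZMod N × ZMod N) ≠ (i, j) := by
    intro h; exact ne_add i (congrArg Prod.fst h)
  have pne5 : ((i, j - 1) : ZMod N × ZMod N) ≠ (i, j) := by
    intro h; exact ne_sub j (congrArg Prod.snd h)
  have pne6 : ((i - 1, j + 1) : ZMod N × ZMod N) ≠ (i, j) := by
    intro h; exact ne_sub i (congrArg Prod.fst h)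
  have pne7 : ((i - 1, j) : ZMod N × ZMod N) ≠ (i, j) := by
    intro h; exact ne_sub i (congrArg Prod.fst h)
  -- distance facts
  have pd1 : (torus N).dist (i, j + 1) (i, j) ≤ 2 := (dist_le_one ha1.symm).trans (by norm_num)
  have pd2 : (torus N).dist (i + 1, j + 1) (i, j) ≤ 2 := dist_le_two ha6.symm ha2.symm
  have pd3 : (torus N).dist (i + 1, j) (i, j) ≤ 2 := (dist_le_one ha2.symm).trans (by norm_num)
  have pd4 : (torus N).dist (i + 1, j - 1) (i, j) ≤ 2 := dist_le_two ha8.symm ha3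
  have pd5 : (torus N).dist (i, j - 1) (i, j) ≤ 2 := (dist_le_one ha3).trans (by norm_num)
  have pd6 : (torus N).dist (i - 1, j + 1) (i, j) ≤ 2 := dist_le_two ha9.symm ha4
  have pd7 : (torus N).dist (i - 1, j) (i, j) ≤ 2 := (dist_le_one ha4).trans (by norm_num)
  -- characterize z
  rw [torus, SimpleGraph.fromRel_adj] at hz
  obtain ⟨-, (⟨hx, hy⟩ | ⟨hy, hx⟩) | (⟨hx, hy⟩ | ⟨hy, hx⟩)⟩ := hz
  · -- z = (i, j - 1)
    have hz' : z = (i, j - 1) := by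
      have : z.2 = j - 1 := by linear_combination -hy
      exact Prod.ext hx.symm this
    subst hz'
    refine ⟨.cons ha5 (.cons ha6.symm (.cons ha7.symm (.cons ha8.symm .nil))), ?_⟩
    intro x hx
    simp only [SimpleGraph.Walk.support_cons, SimpleGraph.Walk.support_nil,
      List.mem_cons, List.mem_singleton] at hx
    rcases hx with rfl | rfl | rfl | rfl | rfl | h
    exacts [⟨pne1, pd1⟩, ⟨pne2, pd2⟩, ⟨pne3, pd3⟩, ⟨pne4, pd4⟩, ⟨pne5, pd5⟩, absurd h (by simp)]
  · -- z = (i - 1, j)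
    have hz' : z = (i - 1, j) := by
      have : z.1 = i - 1 := by linear_combination -hx
      exact Prod.ext this hy.symm
    subst hz'
    refine ⟨.cons ha10.symm (.cons ha9.symm .nil), ?_⟩
    intro x hx
    simp only [SimpleGraph.Walk.support_cons, SimpleGraph.Walk.support_nil,
      List.mem_cons, List.mem_singleton] at hx
    rcases hx with rfl | rfl | rfl | h
    exacts [⟨pne1, pd1⟩, ⟨pne6, pd6⟩, ⟨pne7, pd7⟩, absurd h (by simp)]
  · -- z = (i, j + 1)
    have hz' : z = (i, j + 1) := Prod.ext hx hy
    subst hz'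
    refine ⟨.nil, ?_⟩
    intro x hx
    simp only [SimpleGraph.Walk.support_nil, List.mem_singleton] at hx
    subst hx; exact ⟨pne1, pd1⟩
  · -- z = (i + 1, j)
    have hz' : z = (i + 1, j) := Prod.ext hx hy
    subst hz'
    refine ⟨.cons ha5 (.cons ha6.symm .nil), ?_⟩
    intro x hx
    simp only [SimpleGraph.Walk.support_cons, SimpleGraph.Walk.support_nil,
      List.mem_cons, List.mem_singleton] at hx
    rcases hx with rfl | rfl | rfl | h
    exacts [⟨pne1, pd1⟩, ⟨pne2, pd2⟩, ⟨pne3, pd3⟩, absurd h (by simp)]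

/-- Repairing a walk: any walk between correct vertices can be turned into one
avoiding `B`. -/
lemma avoid (hN : 5 < N) (B : Set (ZMod N × ZMod N))
    (hB : ∀ b ∈ B, ∀ b' ∈ B, b ≠ b' → 5 ≤ (torus N).dist b b') :
    ∀ n : ℕ, ∀ u v : ZMod N × ZMod N, ∀ w : (torus N).Walk u v, w.length ≤ n →
      u ∉ B → v ∉ B → ∃ w' : (torus N).Walk u v, ∀ x ∈ w'.support, x ∉ B := by
  intro n
  induction n with
  | zero =>
    intro u v w hw hu hv
    cases w with
    | nil => exact ⟨.nil, by simpa using hu⟩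
    | cons h p => simp at hw
  | succ n ih =>
    intro u v w hw hu hv
    cases w with
    | nil => exact ⟨.nil, by simpa using hu⟩
    | @cons _ x _ h p =>
      by_cases hx : x ∈ B
      · cases p with
        | nil => exact absurd hx hv
        | @cons _ y _ h2 q =>
          have hy : y ∉ B := by
            intro hyB
            have h5 := hB x hx y hyB h2.ne
            have h1 := dist_le_one h2
            omega
          obtain ⟨w1, hw1⟩ := ring hN x.1 x.2 (show (torus N).Adj (x.1, x.2) u from h.symm)
          obtain ⟨w2, hw2⟩ := ring hN x.1 x.2 (show (torus N).Adj (x.1, x.2) y from h2)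
          obtain ⟨q', hq'⟩ := ih y v q (by
            simp only [SimpleGraph.Walk.length_cons] at hw; omega) hy hv
          refine ⟨(w1.reverse.append w2).append q', ?_⟩
          intro z hz
          rw [SimpleGraph.Walk.support_append, List.mem_append] at hz
          rcases hz with hz | hz
          · rw [SimpleGraph.Walk.support_append, List.mem_append,
              SimpleGraph.Walk.support_reverse, List.mem_reverse] at hz
            have hzx : z ≠ (x.1, x.2) ∧ (torus N).dist z (x.1, x.2) ≤ 2 := by
              rcases hz with hz | hz
              · exact hw1 z hz
              · exact hw2 z (List.mem_of_mem_tail hz)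
            intro hzB
            have h5 := hB z hzB x hx (by simpa using hzx.1)
            have h2' : (torus N).dist z x ≤ 2 := hzx.2
            omega
          · exact hq' z (List.mem_of_mem_tail hz)
      · obtain ⟨p', hp'⟩ := ih x v p (by
          simp only [SimpleGraph.Walk.length_cons] at hw; omega) hx hv
        refine ⟨.cons h p', ?_⟩
        intro z hz
        simp only [SimpleGraph.Walk.support_cons, List.mem_cons] at hz
        rcases hz with rfl | hz
        · exact hu
        · exact hp' z hz

lemma reach_row (hN : 5 < N) (a b : ZMod N) (k : ℕ) :
    (torus N).Reachable (a, b) (a, b + (k : ZMod N)) := by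
  induction k with
  | zero => simpa using SimpleGraph.Reachable.refl _
  | succ k ih =>
    have hadj : (torus N).Adj (a, b + (k : ZMod N)) (a, b + (k : ZMod N) + 1) :=
      adj_right hN a _
    have : (((k : ℕ) + 1 : ℕ) : ZMod N) = (k : ZMod N) + 1 := by push_cast; ring
    rw [this, ← add_assoc]
    exact ih.trans hadj.reachable

lemma reach_col (hN : 5 < N) (a b : ZMod N) (k : ℕ) :
    (torus N).Reachable (a, b) (a + (k : ZMod N), b) := by
  induction k with
  | zero => simpa using SimpleGraph.Reachable.refl _
  | succ k ih =>
    have hadj : (torus N).Adj (a + (k : ZMod N), b) (a + (k : ZMod N) + 1, b) :=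
      adj_down hN _ b
    have : (((k : ℕ) + 1 : ℕ) : ZMod N) = (k : ZMod N) + 1 := by push_cast; ring
    rw [this, ← add_assoc]
    exact ih.trans hadj.reachable

lemma reach_any (hN : 5 < N) (u v : ZMod N × ZMod N) : (torus N).Reachable u v := by
  haveI : NeZero N := ⟨by omega⟩
  have h1 : (torus N).Reachable (u.1, u.2) (u.1, v.2) := by
    have := reach_row hN u.1 u.2 (v.2 - u.2).val
    rwa [ZMod.natCast_rightInverse (v.2 - u.2), add_sub_cancel] at this
  have h2 : (torus N).Reachable (u.1, v.2) (v.1, v.2) := by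
    have := reach_col hN u.1 v.2 (v.1 - u.1).val
    rwa [ZMod.natCast_rightInverse (v.1 - u.1), add_sub_cancel] at this
  exact h1.trans h2

end TorusAux

/-- In an `N × N` torus (`N > 5`), if the Byzantine vertices `B` are pairwise at
graph distance at least 5, then for any two correct vertices `u` and `v` there
is a path from `u` to `v` using only correct vertices (i.e. the subgraph induced
on the correct vertices is connected). -/
theorem torus_correct_vertices_connected (N : ℕ) (hN : 5 < N)
    (B : Set (ZMod N × ZMod N))
    (hB : ∀ b ∈ B, ∀ b' ∈ B, b ≠ b' → 5 ≤ (torus N).dist b b') :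
    ∀ u v : ZMod N × ZMod N, u ∉ B → v ∉ B →
      ∃ w : (torus N).Walk u v, ∀ x ∈ w.support, x ∉ B := by
  intro u v hu hv
  obtain ⟨w⟩ := TorusAux.reach_any hN u v
  exact TorusAux.avoid hN B hB w.length u v w le_rfl hu hv
end

section
/- Safety of the trigger protocol: model an execution as a sequence of message-send events where a Byzantine vertex may send arbitrary standard messages (m) and trigger messages (m,S), and a correct vertex only delivers a message m when it has received (m) from some neighbor q and a trigger message (m,S) with q ∉ S formed by a chain of at most H forwarding hops each appending the sender to S. If any two Byzantine vertices are at graph distance at least H+2, and the source never sends a false message m′, then no correct vertex ever delivers m′. Formally: suppose a correct vertex u delivers m′; then by backward induction along the trigger-message chain of length H+1, each forwarder must be a correct vertex within H+1 hops of the Byzantine neighbor q that sent (m′) to u, and the cardinality of the visited-set S simultaneously satisfies card(S) ≤ H and card(S) ≥ H+1, a contradiction. -/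
/-- Messages of the trigger protocol: standard messages `(m)`, trigger messages
`(m, S)` carrying the set `S` of visited vertices, and a pseudo-message `dlvr m`
recording that a vertex delivers `m`. -/
inductive ProtoMsg (M V : Type) where
  | std : M → ProtoMsg M V
  | trig : M → Finset V → ProtoMsg M V
  | dlvr : M → ProtoMsg M V

/-- `Proto G B s m H u msg` : in some execution of the trigger protocol on the
graph `G` with Byzantine set `B`, correct source `s` broadcasting the authentic
message `m`, and hop parameter `H`, vertex `u` may send `msg` (for `std`/`trig`),
respectively deliver the corresponding message (for `dlvr`).

* Byzantine vertices may send arbitrary standard and trigger messages.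
* The source delivers its own message `m` (and hence, by the last two rules,
  initially multicasts `(m)` and `(m, ∅)`).
* RECEPTION: a correct vertex receiving a standard message directly from the
  source delivers it.
* TRANSMISSION: a correct vertex receiving `(m', S)` from a neighbor `q` with
  `q ∉ S` and `card S ≤ H - 1` stores and multicasts `(m', S ∪ {q})`.
* DECISION: a correct vertex `u` delivers `m'` when it has received `(m')` from
  a (non-source) neighbor `q` (so `(m', q) ∈ Wait`) and has stored a trigger
  message `(m', S)` (received as `(m', S \ {y})` from a neighbor `y`) with
  `q ∉ S`.
* On delivering `m'`, a correct vertex multicasts `(m')` and `(m', ∅)`. -/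
inductive Proto {V M : Type} [DecidableEq V] (G : SimpleGraph V) (B : Set V)
    (s : V) (m : M) (H : ℕ) : V → ProtoMsg M V → Prop where
  | byz_std {u : V} (m' : M) : u ∈ B → Proto G B s m H u (.std m')
  | byz_trig {u : V} (m' : M) (S : Finset V) : u ∈ B → Proto G B s m H u (.trig m' S)
  | src : Proto G B s m H s (.dlvr m)
  | recv_src {u : V} {m' : M} : u ∉ B → G.Adj u s → Proto G B s m H s (.std m') →
      Proto G B s m H u (.dlvr m')
  | fwd {u q : V} {m' : M} {S : Finset V} : u ∉ B → G.Adj u q →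
      Proto G B s m H q (.trig m' S) → q ∉ S → S.card ≤ H - 1 →
      Proto G B s m H u (.trig m' (insert q S))
  | decide {u q y : V} {m' : M} {S : Finset V} : u ∉ B → G.Adj u q → q ≠ s →
      Proto G B s m H q (.std m') →
      G.Adj u y → Proto G B s m H y (.trig m' S) → y ∉ S → S.card ≤ H - 1 →
      q ∉ insert y S → Proto G B s m H u (.dlvr m')
  | dlvr_std {u : V} {m' : M} : Proto G B s m H u (.dlvr m') →
      Proto G B s m H u (.std m')
  | dlvr_trig {u : V} {m' : M} : Proto G B s m H u (.dlvr m') →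
      Proto G B s m H u (.trig m' (∅ : Finset V))

private lemma network_safety_aux {V M : Type} [DecidableEq V] (G : SimpleGraph V)
    (B : Set V) (s : V) (m : M) (H : ℕ) (hH : 1 ≤ H) (hs : s ∉ B)
    (hD : ∀ b ∈ B, ∀ b' ∈ B, b ≠ b' → H + 2 ≤ G.dist b b')
    (m' : M) (hm' : m' ≠ m) {u : V} {msg : ProtoMsg M V}
    (h : Proto G B s m H u msg) :
    (∀ m'', msg = .dlvr m'' → m'' ≠ m') ∧
    (msg = .std m' → u ∈ B) ∧
    (∀ S : Finset V, msg = .trig m' S → u ∉ B →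
      ∃ b ∈ B, b ∈ S ∧ ∃ p : G.Walk u b, p.length ≤ S.card) := by
  induction h with
  | byz_std m'' hu =>
      exact ⟨fun _ h => by simp at h, fun _ => hu, fun S h => by simp at h⟩
  | byz_trig m'' S hu =>
      exact ⟨fun _ h => by simp at h, fun h => by simp at h, fun _ _ hcu => absurd hu hcu⟩
  | src =>
      refine ⟨fun m'' h => ?_, fun h => by simp at h, fun S h => by simp at h⟩
      cases h; exact fun he => hm' he.symm
  | recv_src hu hadj hsrc ih =>
      refine ⟨fun m'' h => ?_, fun h => by simp at h, fun S h => by simp at h⟩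
      cases h
      intro he; subst he
      exact hs (ih.2.1 rfl)
  | fwd hu hadj htrig hqS hcard ih =>
      rename_i u q m'' S
      refine ⟨fun _ h => by simp at h, fun h => by simp at h, fun S' h hcu => ?_⟩
      injection h with he hS
      subst he; subst hS
      by_cases hqB : q ∈ B
      · refine ⟨q, hqB, Finset.mem_insert_self _ _, hadj.toWalk, ?_⟩
        simp [Finset.card_insert_of_notMem hqS]
      · obtain ⟨b, hbB, hbS, p, hp⟩ := ih.2.2 S rfl hqB
        refine ⟨b, hbB, Finset.mem_insert_of_mem hbS, SimpleGraph.Walk.cons hadj p, ?_⟩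
        simp [Finset.card_insert_of_notMem hqS]
        omega
  | decide hu hadjq hqs hstd hadjy htrig hyS hcard hq ih1 ih2 =>
      rename_i u q y m'' S
      refine ⟨fun m''' h => ?_, fun h => by simp at h, fun S'' h => by simp at h⟩
      injection h with he
      subst he
      intro he; subst he
      have hqB : q ∈ B := ih1.2.1 rfl
      by_cases hyB : y ∈ B
      · have hqy : q ≠ y := fun h => hq (h ▸ Finset.mem_insert_self _ _)
        have := hD q hqB y hyB hqy
        have hwalk : G.dist q y ≤ 2 := by
          have hle := SimpleGraph.dist_le
            (SimpleGraph.Walk.cons hadjq.symm (SimpleGraph.Walk.cons hadjy SimpleGraph.Walk.nil))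
          simpa using hle
        omega
      · obtain ⟨b, hbB, hbS, p, hp⟩ := ih2.2.2 S rfl hyB
        have hqb : q ≠ b := fun h => hq (h ▸ Finset.mem_insert_of_mem hbS)
        have := hD q hqB b hbB hqb
        have hwalk : G.dist q b ≤ S.card + 2 := by
          have hle := SimpleGraph.dist_le
            (SimpleGraph.Walk.cons hadjq.symm (SimpleGraph.Walk.cons hadjy p))
          simp [SimpleGraph.Walk.length_cons] at hle
          omega
        omega
  | dlvr_std hd ih =>
      refine ⟨fun _ h => by simp at h, fun h => ?_, fun S h => by simp at h⟩
      cases h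
      exact absurd rfl (ih.1 m' rfl)
  | dlvr_trig hd ih =>
      refine ⟨fun _ h => by simp at h, fun h => by simp at h, fun S h _ => ?_⟩
      cases h
      exact absurd rfl (ih.1 m' rfl)

/-- **Network safety.** If the source is correct and any two distinct Byzantine
vertices are at graph distance at least `H + 2`, then no correct vertex ever
delivers a false message `m' ≠ m`. -/
theorem network_safety {V M : Type} [DecidableEq V] (G : SimpleGraph V)
    (B : Set V) (s : V) (m : M) (H : ℕ) (hH : 1 ≤ H) (hs : s ∉ B)
    (hD : ∀ b ∈ B, ∀ b' ∈ B, b ≠ b' → H + 2 ≤ G.dist b b') :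
    ∀ u : V, u ∉ B → ∀ m' : M, m' ≠ m → ¬ Proto G B s m H u (.dlvr m') := by
  intro u _ m' hm' h
  exact (network_safety_aux G B s m H hH hs hD m' hm' h).1 m' rfl rfl
end

section
/- Tightness of the safety bound: if there exist two Byzantine vertices b and c joined by a path b = p₀, p₁, ..., p_{H+1} = c of length H+1 in which p₁, ..., p_H are correct, then there is a protocol execution in which the correct vertex p₁ delivers a false message m′. Specifically, b sends (m′) to p₁, c sends the trigger (m′,∅) to p_H, and the trigger is forwarded along p_H, p_{H−1}, ..., p₁, accumulating a visited set of size at most H−1 at each forwarding step and arriving at p₁ as (m′,S) with card(S) = H and b ∉ S, so p₁'s delivery condition is satisfied. -/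
/-- **Tightness of the safety bound.** If two Byzantine vertices `p 0` and
`p (H+1)` are joined by a path of length `H + 1` whose interior vertices
`p 1, …, p H` are correct, then there is an execution in which the correct
vertex `p 1` delivers an arbitrary false message `m'`. -/
theorem safety_bound_tight {V M : Type} [DecidableEq V] (G : SimpleGraph V)
    (B : Set V) (s : V) (m : M) (H : ℕ) (hH : 1 ≤ H) (hs : s ∉ B) (m' : M)
    (p : ℕ → V)
    (hb : p 0 ∈ B) (hc : p (H + 1) ∈ B)
    (hadj : ∀ i < H + 1, G.Adj (p i) (p (i + 1)))
    (hcor : ∀ i, 1 ≤ i → i ≤ H → p i ∉ B)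
    (hinj : ∀ i ≤ H + 1, ∀ j ≤ H + 1, p i = p j → i = j) :

    Proto G B s m H (p 1) (.dlvr m') := by
  -- images of p over intervals are "fresh" and have the right cardinality
  have hcard : ∀ a, 2 ≤ a → ((Finset.Icc a (H+1)).image p).card = H + 2 - a := by
    intro a ha
    rw [Finset.card_image_of_injOn, Nat.card_Icc]
    intro i hi j hj hij
    simp only [Finset.coe_Icc, Set.mem_Icc] at hi hj
    exact hinj i hi.2 j hj.2 hij
  have hnotmem : ∀ i ≤ H + 1, ∀ a, i < a → p i ∉ (Finset.Icc a (H+1)).image p := by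
    intro i hi a hia hmem
    obtain ⟨j, hj, hji⟩ := Finset.mem_image.mp hmem
    rw [Finset.mem_Icc] at hj
    have := hinj j hj.2 i hi hji
    omega
  have key : ∀ k, k ≤ H →
      Proto G B s m H (p (H+1-k)) (.trig m' ((Finset.Icc (H+2-k) (H+1)).image p)) := by
    intro k
    induction k with
    | zero =>
      intro _
      have h1 : Finset.Icc (H+2) (H+1) = ∅ := Finset.Icc_eq_empty (by omega)
      simp only [Nat.sub_zero, h1, Finset.image_empty]
      exact Proto.byz_trig m' ∅ hc
    | succ k ih =>
      intro hk
      have hk' : k ≤ H := by omega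
      have prev := ih hk'
      have hset : (Finset.Icc (H+2-(k+1)) (H+1)).image p
          = insert (p (H+1-k)) ((Finset.Icc (H+2-k) (H+1)).image p) := by
        have h2 : Finset.Icc (H+2-(k+1)) (H+1) = insert (H+1-k) (Finset.Icc (H+2-k) (H+1)) := by
          ext x; simp only [Finset.mem_Icc, Finset.mem_insert]; omega
        rw [h2, Finset.image_insert]
      rw [hset]
      have hu : p (H+1-(k+1)) ∉ B := hcor _ (by omega) (by omega)
      have hadj' : G.Adj (p (H+1-(k+1))) (p (H+1-k)) := by
        have := hadj (H-(k+1)+1-1) (by omega)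
        have e1 : H-(k+1)+1-1 = H+1-(k+1)-1 := by omega
        have e2 : H-(k+1)+1-1+1 = H+1-(k+1):= by omega
        have e3 : H+1-(k+1)+1 = H+1-k := by omega
        have h := hadj (H+1-(k+1)-1) (by omega)
        have e4 : H+1-(k+1)-1+1 = H+1-(k+1) := by omega
        rw [e4] at h
        -- h : G.Adj (p (H+1-(k+1)-1)) (p (H+1-(k+1)))  -- wrong direction, use direct
        have h5 := hadj (H+1-(k+1)) (by omega)
        rwa [e3] at h5
      exact Proto.fwd hu hadj' prev
        (hnotmem _ (by omega) _ (by omega))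
        (by rw [hcard _ (by omega)]; omega)
  have htrig := key (H-1) (by omega)
  have e1 : H+1-(H-1) = 2 := by omega
  have e2 : H+2-(H-1) = 3 := by omega
  rw [e1, e2] at htrig
  have hq : G.Adj (p 1) (p 0) := (hadj 0 (by omega)).symm
  have hy : G.Adj (p 1) (p 2) := hadj 1 (by omega)
  refine Proto.decide (hcor 1 le_rfl hH) hq (fun h => hs (h ▸ hb))
    (Proto.byz_std m' hb) hy htrig
    (hnotmem 2 (by omega) 3 (by omega))
    (by rw [hcard 3 (by omega)]; omega) ?_
  intro hmem
  rcases Finset.mem_insert.mp hmem with h | h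
  · exact absurd (hinj 0 (by omega) 2 (by omega) h) (by omega)
  · exact hnotmem 0 (by omega) 3 (by omega) h
end

section
/- Reliable set extension: assume safety holds (no correct vertex ever delivers a false message). Let S be a reliable vertex set (every vertex of S eventually delivers the authentic message m in every execution), let p ∉ S be a correct vertex with a correct neighbor q ∈ S, and suppose there is a correct path of length at most H from some v ∈ S to p all of whose vertices are distinct from q. Then S ∪ {p} is also a reliable vertex set: p eventually receives (m) from q, and by induction along the path v = v₀, ..., v_N = p (N ≤ H), each v_i eventually multicasts (m, {v₀,...,v_{i−1}}), so p eventually holds (m,q) ∈ Wait and (m, {v₀,...,v_{N−1}}) ∈ Trig with q ∉ {v₀,...,v_{N−1}}, triggering delivery of m. -/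
/-- **Reliable set extension.** Assume safety holds (no correct vertex ever
delivers a false message). Let `S` be a reliable set of correct vertices (every
vertex of `S` eventually delivers the authentic message `m`), let `p ∉ S` be a
correct vertex with a correct neighbor `q ∈ S`, and suppose there is a correct
path `w 0, …, w n` (of pairwise distinct correct vertices, `n ≤ H`) from some
vertex `w 0 ∈ S` to `w n = p` all of whose vertices are distinct from `q`.
Then `S ∪ {p}` is also a reliable vertex set. -/
theorem reliable_set_extension {V M : Type} [DecidableEq V] (G : SimpleGraph V)
    (B : Set V) (s : V) (m : M) (H : ℕ) (hH : 1 ≤ H)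
    (hsafe : ∀ u : V, u ∉ B → ∀ m' : M, m' ≠ m → ¬ Proto G B s m H u (.dlvr m'))
    (S : Set V) (hScor : ∀ x ∈ S, x ∉ B)
    (hSrel : ∀ x ∈ S, Proto G B s m H x (.dlvr m))
    (p : V) (hpS : p ∉ S) (hpB : p ∉ B)
    (q : V) (hqS : q ∈ S) (hpq : G.Adj p q)
    (n : ℕ) (hn : n ≤ H) (w : ℕ → V)
    (hw0 : w 0 ∈ S) (hwn : w n = p)
    (hwadj : ∀ i < n, G.Adj (w i) (w (i + 1)))
    (hwcor : ∀ i ≤ n, w i ∉ B)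
    (hwinj : ∀ i ≤ n, ∀ j ≤ n, w i = w j → i = j)
    (hwq : ∀ i ≤ n, w i ≠ q) :
    ∀ x ∈ S ∪ {p}, Proto G B s m H x (.dlvr m) := by
  have key : ∀ i, i ≤ n → Proto G B s m H (w i) (.trig m ((Finset.range i).image w)) := by
    intro i
    induction i with
    | zero => intro _; simpa using Proto.dlvr_trig (hSrel _ hw0)
    | succ i ih =>
      intro h
      have hi : i ≤ n := Nat.le_of_succ_le h
      have hnot : w i ∉ (Finset.range i).image w := by
        intro hmem
        obtain ⟨a, ha, hwa⟩ := Finset.mem_image.mp hmem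
        have ha' := Finset.mem_range.mp ha
        have := hwinj a (le_of_lt (lt_of_lt_of_le ha' hi)) i hi hwa
        omega
      have hcard : ((Finset.range i).image w).card ≤ H - 1 := by
        have : ((Finset.range i).image w).card ≤ i := by
          calc ((Finset.range i).image w).card ≤ (Finset.range i).card :=
            Finset.card_image_le
          _ = i := Finset.card_range i
        omega
      have heq : (Finset.range (i + 1)).image w
          = insert (w i) ((Finset.range i).image w) := by
        rw [Finset.range_add_one, Finset.image_insert]
      rw [heq]
      exact Proto.fwd (hwcor (i + 1) h)
        ((hwadj i (lt_of_lt_of_le (Nat.lt_succ_self i) h)).symm) (ih hi) hnot hcard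
  intro x hx
  rcases hx with hx | hx
  · exact hSrel x hx
  · have hxp : x = p := hx
    subst hxp
    have hq_dlvr := hSrel q hqS
    by_cases hqs : q = s
    · subst hqs
      exact Proto.recv_src hpB hpq (Proto.dlvr_std hq_dlvr)
    · have hn1 : 1 ≤ n := by
        rcases Nat.eq_zero_or_pos n with h0 | h0
        · exfalso; apply hpS; rw [← hwn, h0]; exact hw0
        · exact h0
      have hsucc : n - 1 + 1 = n := by omega
      have hadj : G.Adj x (w (n - 1)) := by
        have := hwadj (n - 1) (by omega)
        rw [hsucc] at this
        rw [← hwn]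
        exact this.symm
      have htrig := key (n - 1) (by omega)
      have hynot : w (n - 1) ∉ (Finset.range (n - 1)).image w := by
        intro hmem
        obtain ⟨a, ha, hwa⟩ := Finset.mem_image.mp hmem
        have ha' := Finset.mem_range.mp ha
        have := hwinj a (by omega) (n - 1) (by omega) hwa
        omega
      have hcard : ((Finset.range (n - 1)).image w).card ≤ H - 1 := by
        have : ((Finset.range (n - 1)).image w).card ≤ n - 1 := by
          calc ((Finset.range (n - 1)).image w).card ≤ (Finset.range (n - 1)).card :=
            Finset.card_image_le
          _ = n - 1 := Finset.card_range _
        omega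
      have hqnot : q ∉ insert (w (n - 1)) ((Finset.range (n - 1)).image w) := by
        intro hmem
        rcases Finset.mem_insert.mp hmem with h' | h'
        · exact hwq (n - 1) (by omega) h'.symm
        · obtain ⟨a, ha, hwa⟩ := Finset.mem_image.mp h'
          exact hwq a (by have := Finset.mem_range.mp ha; omega) hwa
      exact Proto.decide hpB hpq hqs (Proto.dlvr_std hq_dlvr) hadj htrig hynot hcard hqnot
end

section
/- Path repair around spaced Byzantine vertices: let G be the N×N torus (N ≥ 7), B a set of Byzantine vertices pairwise at distance at least 5, and (u₀,...,u_n) any path in G with u₀ and u_n correct. Then there exists a path from u₀ to u_n consisting only of correct vertices, obtained by replacing each Byzantine u_i by a detour along the 8-cycle of vertices surrounding u_i, which is entirely correct since any other Byzantine vertex is at distance at least 5 > 2 from u_i. -/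
set_option linter.unreachableTactic false
set_option linter.unusedTactic false

namespace PathRepairAux

variable {N : ℕ}

lemma torus_adj_add (hN : 7 ≤ N) (x : ZMod N × ZMod N) (δ : ZMod N × ZMod N)
    (hδ : δ = (0,1) ∨ δ = (0,-1) ∨ δ = (1,0) ∨ δ = (-1,0)) :
    (torus N).Adj x (x + δ) := by
  haveI : Fact (1 < N) := ⟨by omega⟩
  have h1 : (1 : ZMod N) ≠ 0 := one_ne_zero
  rw [torus, SimpleGraph.fromRel_adj]
  rcases hδ with rfl | rfl | rfl | rfl
  · exact ⟨by simp [Prod.ext_iff, h1], Or.inr (Or.inl ⟨by simp, by simp⟩)⟩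
  · exact ⟨by simp [Prod.ext_iff, neg_eq_zero, h1], Or.inl (Or.inl ⟨by simp, by simp⟩)⟩
  · exact ⟨by simp [Prod.ext_iff, h1], Or.inr (Or.inr ⟨by simp, by simp⟩)⟩
  · exact ⟨by simp [Prod.ext_iff, neg_eq_zero, h1], Or.inl (Or.inr ⟨by simp, by simp⟩)⟩

lemma adj_offset {x y : ZMod N × ZMod N} (h : (torus N).Adj x y) :
    y = x + (0,1) ∨ y = x + (0,-1) ∨ y = x + (1,0) ∨ y = x + (-1,0) := by
  rw [torus, SimpleGraph.fromRel_adj] at h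
  obtain ⟨-, h⟩ := h
  rcases h with (⟨h1,h2⟩|⟨h1,h2⟩) | (⟨h1,h2⟩|⟨h1,h2⟩)
  · right; left; ext <;> simp [h1, h2]
  · right; right; right; ext <;> simp [h1, h2]
  · left; ext <;> simp [h1, h2]
  · right; right; left; ext <;> simp [h1, h2]

/-- The 8 vertices surrounding `u`. -/
def ringList (u : ZMod N × ZMod N) : List (ZMod N × ZMod N) :=
  [u+(1,0), u+(1,1), u+(0,1), u+(-1,1), u+(-1,0), u+(-1,-1), u+(0,-1), u+(1,-1)]

/-- Every ring vertex is `≠ u` and at distance ≤ 2 from `u`. -/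
lemma ring_close (hN : 7 ≤ N) (u : ZMod N × ZMod N) {v : ZMod N × ZMod N}
    (hv : v ∈ ringList u) : v ≠ u ∧ (torus N).dist u v ≤ 2 := by
  haveI : Fact (1 < N) := ⟨by omega⟩
  have h1 : (1 : ZMod N) ≠ 0 := one_ne_zero
  have hm1 : (-1 : ZMod N) ≠ 0 := by simpa [neg_eq_zero] using h1
  have step : ∀ (x d : ZMod N × ZMod N), (d = (0,1) ∨ d = (0,-1) ∨ d = (1,0) ∨ d = (-1,0)) →
      ∀ y, y = x + d → (torus N).Adj x y := fun x d hd y hy => hy ▸ torus_adj_add hN x d hd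
  have dle : ∀ {x y : ZMod N × ZMod N} (w : (torus N).Walk x y),
      (torus N).dist x y ≤ w.length := fun w => SimpleGraph.dist_le w
  simp [ringList] at hv
  rcases hv with rfl|rfl|rfl|rfl|rfl|rfl|rfl|rfl
  · exact ⟨by simp [Prod.ext_iff, h1], le_trans (dle (.cons (step u (1,0) (by tauto) _ rfl) .nil)) (by simp)⟩
  · refine ⟨by simp [Prod.ext_iff, h1], le_trans (dle (.cons (step u (1,0) (by tauto) _ rfl)
      (.cons (step _ (0,1) (by tauto) (u+(1,1)) (by ext <;> simp)) .nil))) (by simp)⟩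
  · exact ⟨by simp [Prod.ext_iff, h1], le_trans (dle (.cons (step u (0,1) (by tauto) _ rfl) .nil)) (by simp)⟩
  · refine ⟨by simp [Prod.ext_iff, hm1], le_trans (dle (.cons (step u (-1,0) (by tauto) _ rfl)
      (.cons (step _ (0,1) (by tauto) (u+(-1,1)) (by ext <;> simp)) .nil))) (by simp)⟩
  · exact ⟨by simp [Prod.ext_iff, hm1], le_trans (dle (.cons (step u (-1,0) (by tauto) _ rfl) .nil)) (by simp)⟩
  · refine ⟨by simp [Prod.ext_iff, hm1], le_trans (dle (.cons (step u (-1,0) (by tauto) _ rfl)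
      (.cons (step _ (0,-1) (by tauto) (u+(-1,-1)) (by ext <;> simp)) .nil))) (by simp)⟩
  · exact ⟨by simp [Prod.ext_iff, hm1], le_trans (dle (.cons (step u (0,-1) (by tauto) _ rfl) .nil)) (by simp)⟩
  · refine ⟨by simp [Prod.ext_iff, h1], le_trans (dle (.cons (step u (1,0) (by tauto) _ rfl)
      (.cons (step _ (0,-1) (by tauto) (u+(1,-1)) (by ext <;> simp)) .nil))) (by simp)⟩

/-- Walk from `u+(1,0)` to `u+δ` along the ring, for cardinal `δ`. -/
lemma ring_walk_from (hN : 7 ≤ N) (u : ZMod N × ZMod N) (δ : ZMod N × ZMod N)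
    (hδ : δ = (0,1) ∨ δ = (0,-1) ∨ δ = (1,0) ∨ δ = (-1,0)) :
    ∃ w : (torus N).Walk (u+(1,0)) (u+δ), ∀ v ∈ w.support, v ∈ ringList u := by
  have step : ∀ (x d : ZMod N × ZMod N), (d = (0,1) ∨ d = (0,-1) ∨ d = (1,0) ∨ d = (-1,0)) →
      ∀ y, y = x + d → (torus N).Adj x y := fun x d hd y hy => hy ▸ torus_adj_add hN x d hd
  rcases hδ with rfl | rfl | rfl | rfl
  · refine ⟨.cons (step _ (0,1) (by tauto) (u+(1,1)) (by ext <;> simp))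
            (.cons (step _ (-1,0) (by tauto) (u+(0,1)) (by ext <;> simp)) .nil), ?_⟩
    intro v hv; simp [SimpleGraph.Walk.support] at hv
    rcases hv with rfl|rfl|rfl <;> simp [ringList]
  · refine ⟨.cons (step _ (0,-1) (by tauto) (u+(1,-1)) (by ext <;> simp))
            (.cons (step _ (-1,0) (by tauto) (u+(0,-1)) (by ext <;> simp)) .nil), ?_⟩
    intro v hv; simp [SimpleGraph.Walk.support] at hv
    rcases hv with rfl|rfl|rfl <;> simp [ringList]
  · refine ⟨.nil, ?_⟩
    intro v hv; simp at hv; subst hv; simp [ringList]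
  · refine ⟨.cons (step _ (0,1) (by tauto) (u+(1,1)) (by ext <;> simp))
            (.cons (step _ (-1,0) (by tauto) (u+(0,1)) (by ext <;> simp))
            (.cons (step _ (-1,0) (by tauto) (u+(-1,1)) (by ext <;> simp))
            (.cons (step _ (0,-1) (by tauto) (u+(-1,0)) (by ext <;> simp)) .nil))), ?_⟩
    intro v hv; simp [SimpleGraph.Walk.support] at hv
    rcases hv with rfl|rfl|rfl|rfl|rfl <;> simp [ringList]

/-- Walk between any two neighbors of `u` staying on the ring around `u`. -/
lemma ring_walk (hN : 7 ≤ N) (u x y : ZMod N × ZMod N)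
    (hx : (torus N).Adj u x) (hy : (torus N).Adj u y) :
    ∃ w : (torus N).Walk x y, ∀ v ∈ w.support, v ∈ ringList u := by
  obtain ⟨δx, hδx, rfl⟩ : ∃ δ, (δ = (0,1) ∨ δ = (0,-1) ∨ δ = (1,0) ∨ δ = (-1,0)) ∧ x = u + δ := by
    rcases adj_offset hx with h|h|h|h
    exacts [⟨_, by tauto, h⟩, ⟨_, by tauto, h⟩, ⟨_, by tauto, h⟩, ⟨_, by tauto, h⟩]
  obtain ⟨δy, hδy, rfl⟩ : ∃ δ, (δ = (0,1) ∨ δ = (0,-1) ∨ δ = (1,0) ∨ δ = (-1,0)) ∧ y = u + δ := by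
    rcases adj_offset hy with h|h|h|h
    exacts [⟨_, by tauto, h⟩, ⟨_, by tauto, h⟩, ⟨_, by tauto, h⟩, ⟨_, by tauto, h⟩]
  obtain ⟨wx, hwx⟩ := ring_walk_from hN u δx hδx
  obtain ⟨wy, hwy⟩ := ring_walk_from hN u δy hδy
  refine ⟨wx.reverse.append wy, ?_⟩
  intro v hv
  rcases (SimpleGraph.Walk.mem_support_append_iff _ _).1 hv with h|h
  · exact hwx v (by simpa using h)
  · exact hwy v h

/-- The main induction, with fuel `n` bounding the walk length. -/
lemma repair (hN : 7 ≤ N) (B : Set (ZMod N × ZMod N))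
    (hB : ∀ b ∈ B, ∀ b' ∈ B, b ≠ b' → 5 ≤ (torus N).dist b b') :
    ∀ n (a b : ZMod N × ZMod N) (w : (torus N).Walk a b), w.length ≤ n →
      a ∉ B → b ∉ B → ∃ w' : (torus N).Walk a b, ∀ x ∈ w'.support, x ∉ B := by
  have ringB : ∀ c ∈ B, ∀ v ∈ ringList c, v ∉ B := by
    intro c hc v hv hvB
    obtain ⟨hne, hd⟩ := ring_close hN c hv
    have := hB c hc v hvB (Ne.symm hne)
    omega
  intro n
  induction n with
  | zero =>
    intro a b w hw ha hb
    cases w with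
    | nil => exact ⟨.nil, by simpa using ha⟩
    | cons h p => simp at hw
  | succ n ih =>
    intro a b w hw ha hb
    cases w with
    | nil => exact ⟨.nil, by simpa using ha⟩
    | @cons _ c _ h p =>
      by_cases hc : c ∈ B
      · cases p with
        | nil => exact absurd hc hb
        | @cons _ d _ h' q =>
          have hd : d ∉ B := by
            intro hdB
            have := hB c hc d hdB h'.ne
            have : (torus N).dist c d ≤ 1 := SimpleGraph.dist_le h'.toWalk
            omega
          obtain ⟨r, hr⟩ := ring_walk hN c a d h.symm h'
          obtain ⟨w'', hw''⟩ := ih d b q (by simp at hw; omega) hd hb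
          refine ⟨r.append w'', ?_⟩
          intro x hx
          rcases (SimpleGraph.Walk.mem_support_append_iff _ _).1 hx with hx|hx
          · exact ringB c hc x (hr x hx)
          · exact hw'' x hx
      · obtain ⟨w', hw'⟩ := ih c b p (by simp at hw; omega) hc hb
        refine ⟨.cons h w', ?_⟩
        intro x hx
        rw [SimpleGraph.Walk.support_cons, List.mem_cons] at hx
        rcases hx with rfl|hx
        · exact ha
        · exact hw' x hx

end PathRepairAux

/-- **Path repair around spaced Byzantine vertices.** In an `N × N` torus
(`N ≥ 7`) with a set `B` of Byzantine vertices pairwise at graph distance at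
least 5, any path (walk) between two correct vertices `a` and `b` can be
repaired into a path from `a` to `b` consisting only of correct vertices
(each Byzantine vertex on the path can be bypassed along the entirely correct
8-cycle of vertices surrounding it). -/
theorem path_repair_around_byzantine (N : ℕ) (hN : 7 ≤ N)
    (B : Set (ZMod N × ZMod N))
    (hB : ∀ b ∈ B, ∀ b' ∈ B, b ≠ b' → 5 ≤ (torus N).dist b b')
    (a b : ZMod N × ZMod N) (w : (torus N).Walk a b)
    (ha : a ∉ B) (hb : b ∉ B) :
    ∃ w' : (torus N).Walk a b, ∀ x ∈ w'.support, x ∉ B :=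
  PathRepairAux.repair hN B hB w.length a b w le_rfl ha hb
end
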